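/- Let R_θ be the counterclockwise rotation of ℝ² by angle θ ∈ [-π, π]. For an integer n ≥ 2, R_θ is n-monotone (i.e., for all x₁,…,xₙ ∈ ℝ² with xₙ₊₁ = x₁, ∑ᵢ₌₁ⁿ ⟨xᵢ - xᵢ₊₁, R_θ(xᵢ)⟩ ≥ 0) if and only if θ ∈ [-π/n, π/n]. -/

import Mathlib

/-- Counterclockwise rotation of `ℝ²` by angle `θ`. -/
noncomputable def rot (θ : ℝ) (x : ℝ × ℝ) : ℝ × ℝ :=
  (x.1 * Real.cos θ - x.2 * Real.sin θ, x.1 * Real.sin θ + x.2 * Real.cos θ)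

/-- The Euclidean inner product on `ℝ²`. -/
def dot (a b : ℝ × ℝ) : ℝ := a.1 * b.1 + a.2 * b.2


open Finset Complex

noncomputable def myE (n : ℕ) (m : ℤ) : ℂ :=
  Complex.exp (((2 * Real.pi * m / n : ℝ) : ℂ) * Complex.I)

lemma myE_mul (n : ℕ) (a b : ℤ) : myE n a * myE n b = myE n (a + b) := by
  rw [myE, myE, myE, ← Complex.exp_add]
  congr 1
  push_cast
  ring

lemma myE_conj (n : ℕ) (a : ℤ) : (starRingEnd ℂ) (myE n a) = myE n (-a) := by
  rw [myE, myE, ← Complex.exp_conj, map_mul, Complex.conj_ofReal, Complex.conj_I]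
  congr 1
  push_cast
  ring

lemma myE_pow (n : ℕ) (a : ℤ) (k : ℕ) : myE n a ^ k = myE n (k * a) := by
  rw [myE, myE, ← Complex.exp_nat_mul]
  congr 1
  push_cast
  ring

lemma myE_geom (n : ℕ) (hn : 0 < n) (m : ℤ) :
    ∑ k ∈ Finset.range n, myE n m ^ k = if (n : ℤ) ∣ m then (n : ℂ) else 0 := by
  have hn' : (n : ℝ) ≠ 0 := Nat.cast_ne_zero.mpr hn.ne'
  by_cases h : (n : ℤ) ∣ m
  · obtain ⟨t, rfl⟩ := h
    have h1 : myE n ((n : ℤ) * t) = 1 := by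
      rw [myE]
      have hr : (2 * Real.pi * (((n : ℤ) * t : ℤ) : ℝ) / n) = (t : ℝ) * (2 * Real.pi) := by
        rw [div_eq_iff hn']
        push_cast
        ring
      rw [hr]
      have : (((t : ℝ) * (2 * Real.pi) : ℝ) : ℂ) * Complex.I
          = (t : ℤ) * (2 * Real.pi * Complex.I) := by push_cast; ring
      rw [this, Complex.exp_int_mul_two_pi_mul_I]
    simp [h1]
  · have hne : myE n m ≠ 1 := by
      intro hE
      rw [myE, Complex.exp_eq_one_iff] at hE
      obtain ⟨t, ht⟩ := hE
      apply h
      have him := congrArg Complex.im ht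
      simp [Complex.mul_im] at him
      have h2 : (2 * Real.pi) * (m : ℝ) = (2 * Real.pi) * ((t : ℝ) * (n : ℝ)) := by
        rw [div_eq_iff hn'] at him
        linarith [him]
      have h3 := mul_left_cancel₀ (by positivity : (2 * Real.pi) ≠ 0) h2
      refine ⟨t, ?_⟩
      have : (m : ℝ) = ((n * t : ℤ) : ℝ) := by push_cast; linarith [h3]
      exact_mod_cast this
    have hpow : myE n m ^ n = 1 := by
      rw [myE_pow, myE]
      have hr : (2 * Real.pi * (((n : ℤ) * m : ℤ) : ℝ) / n) = (m : ℝ) * (2 * Real.pi) := by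
        rw [div_eq_iff hn']
        push_cast
        ring
      rw [hr]
      have : (((m : ℝ) * (2 * Real.pi) : ℝ) : ℂ) * Complex.I
          = (m : ℤ) * (2 * Real.pi * Complex.I) := by push_cast; ring
      rw [this, Complex.exp_int_mul_two_pi_mul_I]
    rw [geom_sum_eq hne, hpow]
    simp [h]

lemma key_sum (n : ℕ) (hn : 0 < n) (z : ℕ → ℂ) (m : ℤ) (g : ℕ → ℕ)
    (hg : ∀ j' ∈ Finset.Icc 1 n, g j' ∈ Finset.Icc 1 n ∧
      ∀ j ∈ Finset.Icc 1 n, ((n : ℤ) ∣ ((j : ℤ) - (j' : ℤ) - m) ↔ j = g j')) :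
    ∑ k ∈ Finset.range n, myE n (-(k * m)) *
        ((∑ j ∈ Finset.Icc 1 n, myE n (k * j) * z j) *
          (starRingEnd ℂ) (∑ j ∈ Finset.Icc 1 n, myE n (k * j) * z j)) =
      n * ∑ j' ∈ Finset.Icc 1 n, z (g j') * (starRingEnd ℂ) (z j') := by
  calc
    ∑ k ∈ Finset.range n, myE n (-(k * m)) *
        ((∑ j ∈ Finset.Icc 1 n, myE n (k * j) * z j) *
          (starRingEnd ℂ) (∑ j ∈ Finset.Icc 1 n, myE n (k * j) * z j))
      = ∑ k ∈ Finset.range n, ∑ j ∈ Finset.Icc 1 n, ∑ j' ∈ Finset.Icc 1 n,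
          myE n ((j : ℤ) - (j' : ℤ) - m) ^ k * (z j * (starRingEnd ℂ) (z j')) := by
        refine Finset.sum_congr rfl fun k _ => ?_
        rw [map_sum, Finset.sum_mul_sum, Finset.mul_sum]
        refine Finset.sum_congr rfl fun j _ => ?_
        rw [Finset.mul_sum]
        refine Finset.sum_congr rfl fun j' _ => ?_
        rw [map_mul, myE_conj, myE_pow]
        rw [show (k : ℤ) * ((j : ℤ) - (j' : ℤ) - m) = (k * j) + (-(k * j') + -(k * m)) by
          push_cast; ring, ← myE_mul, ← myE_mul]
        ring
    _ = ∑ j ∈ Finset.Icc 1 n, ∑ j' ∈ Finset.Icc 1 n,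
          (z j * (starRingEnd ℂ) (z j')) * ∑ k ∈ Finset.range n,
            myE n ((j : ℤ) - (j' : ℤ) - m) ^ k := by
        rw [Finset.sum_comm]
        refine Finset.sum_congr rfl fun j _ => ?_
        rw [Finset.sum_comm]
        refine Finset.sum_congr rfl fun j' _ => ?_
        rw [← Finset.sum_mul, mul_comm]
    _ = ∑ j' ∈ Finset.Icc 1 n, ∑ j ∈ Finset.Icc 1 n,
          (z j * (starRingEnd ℂ) (z j')) * ∑ k ∈ Finset.range n,
            myE n ((j : ℤ) - (j' : ℤ) - m) ^ k := Finset.sum_comm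
    _ = ∑ j' ∈ Finset.Icc 1 n, (n : ℂ) * (z (g j') * (starRingEnd ℂ) (z j')) := by
        refine Finset.sum_congr rfl fun j' hj' => ?_
        obtain ⟨hgmem, hiff⟩ := hg j' hj'
        rw [Finset.sum_eq_single_of_mem (g j') hgmem]
        · rw [myE_geom n hn, if_pos ((hiff (g j') hgmem).mpr rfl)]
          ring
        · intro j hj hne
          rw [myE_geom n hn, if_neg (fun hd => hne ((hiff j hj).mp hd)), mul_zero]
    _ = n * ∑ j' ∈ Finset.Icc 1 n, z (g j') * (starRingEnd ℂ) (z j') := by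
        rw [Finset.mul_sum]

lemma S_nonneg (n : ℕ) (hn : 2 ≤ n) (θ : ℝ)
    (hθ : ∀ k : ℕ, k < n → Real.cos (θ + 2 * Real.pi * k / n) ≤ Real.cos θ)
    (z : ℕ → ℂ) (hz : z (n + 1) = z 1) :
    0 ≤ ∑ j ∈ Finset.Icc 1 n,
        (Complex.exp (((-θ : ℝ) : ℂ) * Complex.I) * ((z j - z (j + 1)) * (starRingEnd ℂ) (z j))).re := by
  have hn0 : 0 < n := by omega
  set w : ℂ := Complex.exp (((-θ : ℝ) : ℂ) * Complex.I) with hw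
  set c : ℕ → ℂ := fun k => ∑ j ∈ Finset.Icc 1 n, myE n (k * j) * z j with hc
  -- A : diagonal sum
  have hA : ∑ k ∈ Finset.range n, (c k * (starRingEnd ℂ) (c k)) =
      n * ∑ j ∈ Finset.Icc 1 n, z j * (starRingEnd ℂ) (z j) := by
    have h := key_sum n hn0 z 0 id ?_
    · calc ∑ k ∈ Finset.range n, (c k * (starRingEnd ℂ) (c k))
          = ∑ k ∈ Finset.range n, myE n (-(k * 0)) * (c k * (starRingEnd ℂ) (c k)) := by
            refine Finset.sum_congr rfl fun k _ => ?_
            norm_num [myE]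
        _ = _ := h
    · intro j' hj'
      refine ⟨hj', fun j hj => ?_⟩
      simp only [Finset.mem_Icc] at hj hj'
      constructor
      · rintro ⟨t, ht⟩
        have h1 : -(n : ℤ) < n * t := by omega
        have h2 : (n : ℤ) * t < n := by omega
        have hn' : (0 : ℤ) < n := by exact_mod_cast hn0
        have ht0 : t = 0 := by nlinarith
        rw [ht0, mul_zero] at ht
        simp only [id_eq]
        omega
      · rintro rfl
        simp
  -- B : shifted sum
  have hB : ∑ k ∈ Finset.range n, myE n (-(k * 1)) * (c k * (starRingEnd ℂ) (c k)) =
      n * ∑ j ∈ Finset.Icc 1 n, z (j + 1) * (starRingEnd ℂ) (z j) := by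
    have h := key_sum n hn0 z 1 (fun j' => if j' = n then 1 else j' + 1) ?_
    · rw [h]
      congr 1
      refine Finset.sum_congr rfl fun j hj => ?_
      simp only [Finset.mem_Icc] at hj
      by_cases hje : j = n
      · subst hje
        rw [if_pos rfl, ← hz]
      · rw [if_neg hje]
    · intro j' hj'
      simp only [Finset.mem_Icc] at hj'
      constructor
      · simp only [Finset.mem_Icc]
        try dsimp only
        split <;> omega
      · intro j hj
        simp only [Finset.mem_Icc] at hj
        constructor
        · rintro ⟨t, ht⟩
          have hn' : (0 : ℤ) < n := by exact_mod_cast hn0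
          have h1 : -(n : ℤ) ≤ n * t := by omega
          have h2 : (n : ℤ) * t < n := by omega
          have ht1 : -1 ≤ t := by nlinarith
          have ht2 : t ≤ 0 := by nlinarith
          try dsimp only
          interval_cases t
          · rw [show (n : ℤ) * -1 = -(n : ℤ) by ring] at ht
            split <;> omega
          · rw [mul_zero] at ht
            split <;> omega
        · rintro rfl
          try dsimp only
          split
          · subst ‹j' = n›
            exact ⟨-1, by push_cast; ring⟩
          · exact ⟨0, by push_cast; ring⟩
  -- main identity
  have hmain : (n : ℝ) * ∑ j ∈ Finset.Icc 1 n,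
        (w * ((z j - z (j + 1)) * (starRingEnd ℂ) (z j))).re
      = ∑ k ∈ Finset.range n,
          (Real.cos θ - Real.cos (θ + 2 * Real.pi * k / n)) * Complex.normSq (c k) := by
    have hLc : ((n : ℂ) * ∑ j ∈ Finset.Icc 1 n, w * ((z j - z (j + 1)) * (starRingEnd ℂ) (z j)))
        = ∑ k ∈ Finset.range n, (w - w * myE n (-(k * 1))) * (c k * (starRingEnd ℂ) (c k)) := by
      have e1 : ∑ j ∈ Finset.Icc 1 n, w * ((z j - z (j + 1)) * (starRingEnd ℂ) (z j))
          = w * ((∑ j ∈ Finset.Icc 1 n, z j * (starRingEnd ℂ) (z j))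
              - ∑ j ∈ Finset.Icc 1 n, z (j + 1) * (starRingEnd ℂ) (z j)) := by
        rw [mul_sub, Finset.mul_sum, Finset.mul_sum, ← Finset.sum_sub_distrib]
        refine Finset.sum_congr rfl fun j _ => ?_
        ring
      rw [e1]
      rw [show ((n : ℂ) * (w * ((∑ j ∈ Finset.Icc 1 n, z j * (starRingEnd ℂ) (z j))
              - ∑ j ∈ Finset.Icc 1 n, z (j + 1) * (starRingEnd ℂ) (z j))))
          = w * ((n * ∑ j ∈ Finset.Icc 1 n, z j * (starRingEnd ℂ) (z j))
              - n * ∑ j ∈ Finset.Icc 1 n, z (j + 1) * (starRingEnd ℂ) (z j)) by ring]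
      rw [← hA, ← hB, mul_sub, Finset.mul_sum, Finset.mul_sum, ← Finset.sum_sub_distrib]
      refine Finset.sum_congr rfl fun k _ => ?_
      ring
    have := congrArg Complex.re hLc
    rw [Complex.re_sum] at this
    have hre : ((n : ℂ) * ∑ j ∈ Finset.Icc 1 n, w * ((z j - z (j + 1)) * (starRingEnd ℂ) (z j))).re
        = (n : ℝ) * ∑ j ∈ Finset.Icc 1 n, (w * ((z j - z (j + 1)) * (starRingEnd ℂ) (z j))).re := by
      rw [show ((n : ℂ)) = ((n : ℝ) : ℂ) by push_cast; rfl, Complex.re_ofReal_mul, Complex.re_sum]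
    rw [hre] at this
    rw [this]
    refine Finset.sum_congr rfl fun k hk => ?_
    have hck : c k * (starRingEnd ℂ) (c k) = ((Complex.normSq (c k) : ℝ) : ℂ) :=
      Complex.mul_conj (c k)
    have hwE : w - w * myE n (-(k * 1)) =
        Complex.exp (((-θ : ℝ) : ℂ) * Complex.I)
          - Complex.exp (((-(θ + 2 * Real.pi * k / n) : ℝ) : ℂ) * Complex.I) := by
      rw [hw, myE, ← Complex.exp_add]
      congr 2
      push_cast
      ring
    rw [hck, hwE]
    rw [show (Complex.exp (((-θ : ℝ) : ℂ) * Complex.I)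
          - Complex.exp (((-(θ + 2 * Real.pi * k / n) : ℝ) : ℂ) * Complex.I))
            * ((Complex.normSq (c k) : ℝ) : ℂ)
        = Complex.exp (((-θ : ℝ) : ℂ) * Complex.I) * ((Complex.normSq (c k) : ℝ) : ℂ)
          - Complex.exp (((-(θ + 2 * Real.pi * k / n) : ℝ) : ℂ) * Complex.I)
            * ((Complex.normSq (c k) : ℝ) : ℂ) by ring]
    simp only [Complex.sub_re, Complex.mul_re, Complex.ofReal_re, Complex.ofReal_im,
      Complex.exp_ofReal_mul_I_re, mul_zero, sub_zero]
    rw [Real.cos_neg, Real.cos_neg]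
    ring
  have hterm : ∀ k ∈ Finset.range n,
      0 ≤ (Real.cos θ - Real.cos (θ + 2 * Real.pi * k / n)) * Complex.normSq (c k) := by
    intro k hk
    have := hθ k (Finset.mem_range.mp hk)
    have := Complex.normSq_nonneg (c k)
    nlinarith
  have hpos : 0 ≤ (n : ℝ) * ∑ j ∈ Finset.Icc 1 n,
      (w * ((z j - z (j + 1)) * (starRingEnd ℂ) (z j))).re := by
    rw [hmain]
    exact Finset.sum_nonneg hterm
  have hn' : (0 : ℝ) < n := by exact_mod_cast hn0
  nlinarith [hpos]

lemma bridge (θ : ℝ) (x y : ℝ × ℝ) :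
    dot (x - y) (rot θ x) =
      (Complex.exp (((-θ : ℝ) : ℂ) * Complex.I) *
        (((⟨x.1, x.2⟩ : ℂ) - (⟨y.1, y.2⟩ : ℂ)) * (starRingEnd ℂ) (⟨x.1, x.2⟩ : ℂ))).re := by
  simp only [dot, rot, Prod.fst_sub, Prod.snd_sub, Complex.mul_re, Complex.sub_re,
    Complex.sub_im, Complex.conj_re, Complex.conj_im, Complex.exp_ofReal_mul_I_re,
    Complex.exp_ofReal_mul_I_im, Real.cos_neg, Real.sin_neg, Complex.mul_im]
  ring

lemma cos_bound (n : ℕ) (hn : 2 ≤ n) (θ : ℝ) (h1 : -(Real.pi / n) ≤ θ)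
    (h2 : θ ≤ Real.pi / n) (k : ℕ) (hk : k < n) :
    Real.cos (θ + 2 * Real.pi * k / n) ≤ Real.cos θ := by
  have hπ := Real.pi_pos
  have hn' : (0 : ℝ) < n := by
    have : (0 : ℕ) < n := by omega
    exact_mod_cast this
  have hn1 : (1 : ℝ) ≤ n := by
    have : (1 : ℕ) ≤ n := by omega
    exact_mod_cast this
  have hπn : Real.pi / n ≤ Real.pi := div_le_self hπ.le hn1
  have hπn0 : 0 < Real.pi / n := by positivity
  have hcosθ : Real.cos (Real.pi / n) ≤ Real.cos θ := by
    rw [← Real.cos_abs θ]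
    refine Real.cos_le_cos_of_nonneg_of_le_pi (abs_nonneg θ) hπn ?_
    rw [abs_le]
    constructor <;> linarith
  rcases Nat.eq_zero_or_pos k with hk0 | hk1
  · subst hk0
    simp
  · have hk1' : (1 : ℝ) ≤ k := by exact_mod_cast hk1
    have hkn : (k : ℝ) ≤ (n : ℝ) - 1 := by
      have : (k : ℝ) + 1 ≤ n := by exact_mod_cast hk
      linarith
    set x := θ + 2 * Real.pi * k / n with hx
    have e2 : x * n = θ * n + 2 * Real.pi * k := by
      rw [hx]
      field_simp
    have e1 : Real.pi / n * n = Real.pi := div_mul_cancel₀ _ hn'.ne'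
    have hx1 : Real.pi / n ≤ x := by
      refine (mul_le_mul_iff_of_pos_right hn').mp ?_
      have f1 : -Real.pi ≤ θ * n := by
        have h := mul_le_mul_of_nonneg_right h1 hn'.le
        have e3 : -(Real.pi / n) * n = -Real.pi := by field_simp
        linarith
      have f2 : 2 * Real.pi ≤ 2 * Real.pi * k := by nlinarith
      rw [e1, e2]
      linarith
    have hx2 : x ≤ 2 * Real.pi - Real.pi / n := by
      refine (mul_le_mul_iff_of_pos_right hn').mp ?_
      have e4 : (2 * Real.pi - Real.pi / n) * n = 2 * Real.pi * n - Real.pi := by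
        field_simp
      have f1 : θ * n ≤ Real.pi := by
        have h := mul_le_mul_of_nonneg_right h2 hn'.le
        linarith
      have f2 : 2 * Real.pi * k ≤ 2 * Real.pi * n - 2 * Real.pi := by nlinarith
      rw [e2, e4]
      linarith
    have hfin : Real.cos x ≤ Real.cos (Real.pi / n) := by
      by_cases hxπ : x ≤ Real.pi
      · exact Real.cos_le_cos_of_nonneg_of_le_pi hπn0.le hxπ hx1
      · rw [← Real.cos_two_pi_sub]
        exact Real.cos_le_cos_of_nonneg_of_le_pi hπn0.le (by linarith) (by linarith)
    linarith

lemma term_eq (θ α δ : ℝ) :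
    dot (((Real.cos α, Real.sin α) : ℝ × ℝ) - (Real.cos (α + δ), Real.sin (α + δ)))
        (rot θ ((Real.cos α, Real.sin α) : ℝ × ℝ))
      = Real.cos θ - Real.cos (θ - δ) := by
  simp only [dot, rot, Prod.fst_sub, Prod.snd_sub, Real.cos_add, Real.sin_add, Real.cos_sub]
  linear_combination (Real.cos θ - Real.cos θ * Real.cos δ - Real.sin θ * Real.sin δ) *
    (Real.sin_sq_add_cos_sq α)

/-- For `n ≥ 2`, the rotation `R_θ` (with `θ ∈ [-π, π]`) is `n`-monotone
iff `θ ∈ [-π/n, π/n]`. -/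
theorem rotation_nMonotone_iff (θ : ℝ) (hθ : θ ∈ Set.Icc (-Real.pi) Real.pi)
    (n : ℕ) (hn : 2 ≤ n) :
    (∀ p : ℕ → ℝ × ℝ, p (n + 1) = p 1 →
        0 ≤ ∑ i ∈ Finset.Icc 1 n, dot (p i - p (i + 1)) (rot θ (p i)))
      ↔ θ ∈ Set.Icc (-(Real.pi / n)) (Real.pi / n) := by
  obtain ⟨hθ1, hθ2⟩ := hθ
  have hπ := Real.pi_pos
  have hn' : (0 : ℝ) < n := by
    have : (0 : ℕ) < n := by omega
    exact_mod_cast this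
  have hπn0 : 0 < Real.pi / n := by positivity
  constructor
  · intro h
    rw [Set.mem_Icc]
    by_contra hc
    rw [not_and_or] at hc
    push_neg at hc
    rcases hc with hneg | hpos
    · -- θ < -(π/n)
      set p : ℕ → ℝ × ℝ :=
        fun j => (Real.cos (-(2 * Real.pi * j / n)), Real.sin (-(2 * Real.pi * j / n))) with hp
      have hang : -(2 * Real.pi * ((n + 1 : ℕ) : ℝ) / n) = -(2 * Real.pi * ((1 : ℕ) : ℝ) / n) - 2 * Real.pi := by
        push_cast
        field_simp
        ring
      have hper : p (n + 1) = p 1 := by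
        rw [hp]
        dsimp only
        rw [hang, Real.cos_sub_two_pi, Real.sin_sub_two_pi]
      have hsum := h p hper
      have hterm : ∀ j ∈ Finset.Icc 1 n, dot (p j - p (j + 1)) (rot θ (p j))
          = Real.cos θ - Real.cos (θ + 2 * Real.pi / n) := by
        intro j _
        have hδ : -(2 * Real.pi * ((j + 1 : ℕ) : ℝ) / n)
            = -(2 * Real.pi * (j : ℝ) / n) + -(2 * Real.pi / n) := by
          push_cast
          field_simp
          ring
        rw [hp]
        dsimp only
        rw [hδ, term_eq θ _ _, sub_neg_eq_add]
      rw [Finset.sum_congr rfl hterm, Finset.sum_const, Nat.card_Icc] at hsum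
      have hcard : n + 1 - 1 = n := by omega
      rw [hcard, nsmul_eq_mul] at hsum
      have hlt : Real.cos θ < Real.cos (θ + 2 * Real.pi / n) := by
        have h2n : 2 * Real.pi / (n : ℝ) = 2 * (Real.pi / n) := by ring
        have h2 : θ + 2 * Real.pi / n < -θ := by linarith
        calc Real.cos θ = Real.cos (-θ) := (Real.cos_neg θ).symm
          _ < Real.cos |θ + 2 * Real.pi / n| :=
              Real.cos_lt_cos_of_nonneg_of_le_pi (abs_nonneg _) (by linarith)
                (abs_lt.mpr ⟨by linarith, h2⟩)
          _ = Real.cos (θ + 2 * Real.pi / n) := Real.cos_abs _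
      nlinarith [hsum, hlt, hn']
    · -- π/n < θ
      set p : ℕ → ℝ × ℝ :=
        fun j => (Real.cos (2 * Real.pi * j / n), Real.sin (2 * Real.pi * j / n)) with hp
      have hang : (2 * Real.pi * ((n + 1 : ℕ) : ℝ) / n) = (2 * Real.pi * ((1 : ℕ) : ℝ) / n) + 2 * Real.pi := by
        push_cast
        field_simp
        ring
      have hper : p (n + 1) = p 1 := by
        rw [hp]
        dsimp only
        rw [hang, Real.cos_add_two_pi, Real.sin_add_two_pi]
      have hsum := h p hper
      have hterm : ∀ j ∈ Finset.Icc 1 n, dot (p j - p (j + 1)) (rot θ (p j))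
          = Real.cos θ - Real.cos (θ - 2 * Real.pi / n) := by
        intro j _
        have hδ : (2 * Real.pi * ((j + 1 : ℕ) : ℝ) / n)
            = (2 * Real.pi * (j : ℝ) / n) + (2 * Real.pi / n) := by
          push_cast
          field_simp
        rw [hp]
        dsimp only
        rw [hδ, term_eq θ _ _]
      rw [Finset.sum_congr rfl hterm, Finset.sum_const, Nat.card_Icc] at hsum
      have hcard : n + 1 - 1 = n := by omega
      rw [hcard, nsmul_eq_mul] at hsum
      have hlt : Real.cos θ < Real.cos (θ - 2 * Real.pi / n) := by
        have h2n : 2 * Real.pi / (n : ℝ) = 2 * (Real.pi / n) := by ring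
        calc Real.cos θ
            < Real.cos |θ - 2 * Real.pi / n| :=
              Real.cos_lt_cos_of_nonneg_of_le_pi (abs_nonneg _) hθ2
                (abs_lt.mpr ⟨by linarith, by linarith⟩)
          _ = Real.cos (θ - 2 * Real.pi / n) := Real.cos_abs _
      nlinarith [hsum, hlt, hn']
  · intro hmem p hper
    obtain ⟨hm1, hm2⟩ := Set.mem_Icc.mp hmem
    have hS := S_nonneg n hn θ (fun k hk => cos_bound n hn θ hm1 hm2 k hk)
      (fun j => ⟨(p j).1, (p j).2⟩) (by simp only [hper])
    have heq : ∑ i ∈ Finset.Icc 1 n, dot (p i - p (i + 1)) (rot θ (p i))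
        = ∑ j ∈ Finset.Icc 1 n,
            (Complex.exp (((-θ : ℝ) : ℂ) * Complex.I) *
              (((fun j => (⟨(p j).1, (p j).2⟩ : ℂ)) j - (fun j => (⟨(p j).1, (p j).2⟩ : ℂ)) (j + 1)) *
                (starRingEnd ℂ) ((fun j => (⟨(p j).1, (p j).2⟩ : ℂ)) j))).re :=
      Finset.sum_congr rfl fun j _ => bridge θ (p j) (p (j + 1))
    rw [heq]
    exact hS
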